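/- Let Q : S × A → ℝ with 0 < Q(s,a) bounded above, let d be a probability distribution on S, and suppose the variational family consists of policies π_θ with entropies uniformly bounded above. Then for each fixed ε > 0 the objective L(ε, θ) = E_{d, π_θ}[Q/ε] + E_d[H(π_θ)] is bounded above; consequently if some parameter ω° achieves ε_{ω°} = 0 (and L(ω°, θ) = +∞ for some non-deterministic θ), then every maximizer ω* of sup_θ L(ω, θ) satisfies ε_{ω*} = 0. -/
import Mathlib


open MeasureTheory

theorem stmt_15 {S A Θ Ω : Type*} [MeasurableSpace S] [MeasurableSpace A]
    (μS : Measure S) (μA : Measure A)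
    (Q : S → A → ℝ) (hQpos : ∀ s a, 0 < Q s a)
    (hQbdd : ∃ M : ℝ, ∀ s a, Q s a ≤ M)
    (d : S → ℝ) (hd : ∀ s, 0 ≤ d s) (hd1 : ∫ s, d s ∂μS = 1)
    (π : Θ → S → A → ℝ)
    (Hent : Θ → S → ℝ)
    (hHent : ∀ θ s, Hent θ s = -∫ a, π θ s a * Real.log (π θ s a) ∂μA)
    (hHbdd : ∃ Hmax : ℝ, ∀ θ s, Hent θ s ≤ Hmax)
    (hEbdd : ∃ M : ℝ, ∀ θ s, |∫ a, π θ s a * Q s a ∂μA| ≤ M)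
    (L : ℝ → Θ → ℝ)
    (hL : ∀ ε θ, L ε θ
      = (∫ s, d s * ∫ a, π θ s a * (Q s a / ε) ∂μA ∂μS)
        + ∫ s, d s * Hent θ s ∂μS)
    (εω : Ω → ℝ) (hεnn : ∀ ω, 0 ≤ εω ω)
    (Lω : Ω → Θ → EReal)
    (hLω : ∀ ω θ, 0 < εω ω → Lω ω θ = ((L (εω ω) θ : ℝ) : EReal))
    (hω0 : ∃ ω0, εω ω0 = 0 ∧ ∃ θ0, Lω ω0 θ0 = ⊤) :
    (∀ ε : ℝ, 0 < ε → ∃ B : ℝ, ∀ θ, L ε θ ≤ B) ∧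
      ∀ ωstar : Ω, (∀ ω, (⨆ θ, Lω ω θ) ≤ ⨆ θ, Lω ωstar θ) → εω ωstar = 0 := by
  obtain ⟨M, hM⟩ := hEbdd
  obtain ⟨Hmax, hHmax⟩ := hHbdd
  have hdInt : Integrable d μS := by
    by_contra h
    rw [integral_undef h] at hd1
    norm_num at hd1
  have key : ∀ ε : ℝ, 0 < ε → ∀ θ, L ε θ ≤ (max M 0) / ε + max Hmax 0 := by
    intro ε hε θ
    rw [hL]
    have hb1 : (∫ s, d s * ∫ a, π θ s a * (Q s a / ε) ∂μA ∂μS) ≤ (max M 0) / ε := by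
      have hInt : Integrable (fun s => d s * ((max M 0) / ε)) μS := hdInt.mul_const _
      have hbnd : ∀ s, ‖d s * ∫ a, π θ s a * (Q s a / ε) ∂μA‖ ≤ d s * ((max M 0) / ε) := by
        intro s
        have h1 : (∫ a, π θ s a * (Q s a / ε) ∂μA) = (∫ a, π θ s a * Q s a ∂μA) / ε := by
          rw [← integral_div]; congr 1; ext a; ring
        rw [h1, Real.norm_eq_abs, abs_mul, abs_of_nonneg (hd s), abs_div, abs_of_pos hε]
        have : |∫ a, π θ s a * Q s a ∂μA| / ε ≤ (max M 0) / ε := by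
          gcongr
          exact le_trans (hM θ s) (le_max_left _ _)
        exact mul_le_mul_of_nonneg_left this (hd s)
      have hnorm := norm_integral_le_of_norm_le hInt (Filter.Eventually.of_forall hbnd)
      calc (∫ s, d s * ∫ a, π θ s a * (Q s a / ε) ∂μA ∂μS)
          ≤ ‖∫ s, d s * ∫ a, π θ s a * (Q s a / ε) ∂μA ∂μS‖ := le_abs_self _
        _ ≤ ∫ s, d s * ((max M 0) / ε) ∂μS := hnorm
        _ = (max M 0) / ε := by rw [integral_mul_const, hd1, one_mul]
    have hb2 : (∫ s, d s * Hent θ s ∂μS) ≤ max Hmax 0 := by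
      by_cases hInt : Integrable (fun s => d s * Hent θ s) μS
      · calc (∫ s, d s * Hent θ s ∂μS)
            ≤ ∫ s, d s * max Hmax 0 ∂μS := by
              apply integral_mono hInt (hdInt.mul_const _)
              intro s
              exact mul_le_mul_of_nonneg_left
                (le_trans (hHmax θ s) (le_max_left _ _)) (hd s)
          _ = max Hmax 0 := by rw [integral_mul_const, hd1, one_mul]
      · rw [integral_undef hInt]
        exact le_max_right _ _
    linarith
  refine ⟨fun ε hε => ⟨(max M 0) / ε + max Hmax 0, key ε hε⟩, ?_⟩
  intro ωstar hsup
  obtain ⟨ω0, hε0, θ0, htop⟩ := hω0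
  by_contra hne
  have hεpos : 0 < εω ωstar := lt_of_le_of_ne (hεnn ωstar) (Ne.symm hne)
  have htop' : (⨆ θ, Lω ωstar θ) = ⊤ := by
    have h0 : (⨆ θ, Lω ω0 θ) = ⊤ :=
      top_le_iff.mp (htop ▸ le_iSup (Lω ω0) θ0)
    exact top_le_iff.mp (h0 ▸ hsup ω0)
  have hle : (⨆ θ, Lω ωstar θ) ≤ (((max M 0) / εω ωstar + max Hmax 0 : ℝ) : EReal) := by
    apply iSup_le
    intro θ
    rw [hLω ωstar θ hεpos]
    exact_mod_cast key (εω ωstar) hεpos θ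
  rw [htop'] at hle
  exact (EReal.coe_lt_top _).not_ge hle
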